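/- Let D be a finite directed graph, G a finitely generated free abelian group, and α : H₁(D) → G a group homomorphism, inducing a ring homomorphism α : ℤ[H₁(D)] → ℤ[G]. Fix a spanning tree T of (the underlying undirected graph of) D, label each edge of T by 1 ∈ G, and label each directed edge e ∉ T by α of the class of the unique cycle in T ∪ {e} traversing e positively. Let A^G be the resulting G-labeled adjacency matrix over ℤ[G]. Then det(I − A^G) = α(P_D), where P_D = det(I − A) is the Perron polynomial of D. -/

import Mathlib

open scoped BigOperators

/-- The simplicial boundary map of a finite directed graph, `∂e = t(e) - s(e)`,
on integral 1-chains. -/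
def graphBoundary (V E : Type) [Fintype E] [DecidableEq V] (s t : E → V) :
    (E → ℤ) →+ (V → ℤ) where
  toFun z v := ∑ e, z e * ((if t e = v then 1 else 0) - (if s e = v then 1 else 0))
  map_zero' := by ext v; simp
  map_add' x y := by ext v; simp [add_mul, Finset.sum_add_distrib]

section Aux

variable (V E : Type) [Fintype V] [Fintype E] [DecidableEq V] [DecidableEq E]
  (s t : E → V)

/-- Telescoping sum over `Fin`. -/
lemma fin_telescope {M : Type*} [AddCommGroup M] (n : ℕ) (g : Fin (n + 1) → M) :
    ∑ i : Fin n, (g i.succ - g i.castSucc) = g (Fin.last n) - g 0 := by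
  induction n with
  | zero => simp
  | succ n ih =>
    rw [Fin.sum_univ_castSucc]
    have := ih (fun i => g i.castSucc)
    simp only [Fin.succ_castSucc] at this ⊢
    rw [show (Fin.castSucc (0 : Fin (n+1))) = (0 : Fin (n+2)) from rfl] at this
    rw [this]
    have hlast : (Fin.last n).succ = Fin.last (n + 1) := rfl
    have hcast : Fin.castSucc (Fin.last n) = (Fin.last n).castSucc := rfl
    rw [hlast]
    abel

/-- A 1-cycle supported on a spanning tree is zero. -/
lemma tree_support_zero (T : Finset E)
    (hTcard : T.card + 1 = Fintype.card V)
    (hTconn : ∀ u v : V, ∃ (n : ℕ) (q : Fin (n + 1) → V), q 0 = u ∧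
      q (Fin.last n) = v ∧ ∀ i : Fin n, ∃ e ∈ T,
        (s e = q i.castSucc ∧ t e = q i.succ) ∨
        (t e = q i.castSucc ∧ s e = q i.succ))
    (z : E → ℤ) (hz : graphBoundary V E s t z = 0)
    (hsupp : ∀ e ∉ T, z e = 0) : z = 0 := by
  classical
  -- work over ℚ
  set d : V → (V → ℚ) := fun u v => if u = v then 1 else 0 with hd
  set f : T → (V → ℚ) :=
    fun e => fun v => (if t e.1 = v then 1 else 0) - (if s e.1 = v then 1 else 0) with hf
  have hVpos : 0 < Fintype.card V := by omega
  have : Nonempty V := Fintype.card_pos_iff.mp hVpos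
  obtain ⟨v0⟩ := this
  -- span of f contains all differences of vertex deltas
  have hspan : ∀ u w : V, d w - d u ∈ Submodule.span ℚ (Set.range f) := by
    intro u w
    obtain ⟨n, q, hq0, hqn, hstep⟩ := hTconn u w
    have : d w - d u = ∑ i : Fin n, (d (q i.succ) - d (q i.castSucc)) := by
      rw [fin_telescope n (fun i => d (q i)), hq0, hqn]
    rw [this]
    refine Submodule.sum_mem _ fun i _ => ?_
    obtain ⟨e, heT, he⟩ := hstep i
    rcases he with ⟨hs, ht⟩ | ⟨ht, hs⟩
    · have : d (q i.succ) - d (q i.castSucc) = f ⟨e, heT⟩ := by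
        funext v; simp only [hf, hd, Pi.sub_apply]; rw [ht, hs]
      rw [this]
      exact Submodule.subset_span ⟨⟨e, heT⟩, rfl⟩
    · have : d (q i.succ) - d (q i.castSucc) = -f ⟨e, heT⟩ := by
        funext v; simp only [hf, hd, Pi.sub_apply, Pi.neg_apply]; rw [ht, hs]; ring
      rw [this]
      exact Submodule.neg_mem _ (Submodule.subset_span ⟨⟨e, heT⟩, rfl⟩)
  -- the family g of deltas minus delta at v0, indexed by vertices other than v0
  set g : {u : V // u ≠ v0} → (V → ℚ) := fun u => d u.1 - d v0 with hg
  have hgind : LinearIndependent ℚ g := by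
    rw [Fintype.linearIndependent_iff]
    intro c hc u
    have := congrFun hc u.1
    simp only [Finset.sum_apply, Pi.smul_apply, Pi.zero_apply, hg, Pi.sub_apply,
      smul_eq_mul, hd] at this
    have h2 : ∀ w : {u : V // u ≠ v0},
        c w * ((if w.1 = u.1 then (1:ℚ) else 0) - (if v0 = u.1 then 1 else 0))
        = if w = u then c u else 0 := by
      intro w
      have hv0 : v0 ≠ u.1 := fun h => u.2 h.symm
      by_cases hw : w = u
      · subst hw; simp [hv0]
      · have : w.1 ≠ u.1 := fun h => hw (Subtype.ext h)
        simp [this, hv0, hw]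
    rw [Finset.sum_congr rfl (fun w _ => h2 w)] at this
    simpa using this
  -- rank computation
  have hle : Submodule.span ℚ (Set.range g) ≤ Submodule.span ℚ (Set.range f) := by
    rw [Submodule.span_le]
    rintro _ ⟨u, rfl⟩
    exact hspan v0 u.1
  have hcardg : Fintype.card {u : V // u ≠ v0} = T.card := by
    rw [Fintype.card_subtype_compl]
    simp [← hTcard]
  have h1 : Module.finrank ℚ (Submodule.span ℚ (Set.range g)) = T.card := by
    rw [finrank_span_eq_card hgind, hcardg]
  have h2 : Module.finrank ℚ (Submodule.span ℚ (Set.range f)) ≤ T.card := by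
    have := finrank_range_le_card f (R := ℚ)
    simpa [Fintype.card_coe, Set.finrank] using this
  have h3 : Module.finrank ℚ (Submodule.span ℚ (Set.range f)) = T.card :=
    le_antisymm h2 (h1 ▸ Submodule.finrank_mono hle)
  have hfind : LinearIndependent ℚ f := by
    rw [linearIndependent_iff_card_eq_finrank_span]
    rw [Set.finrank, h3, Fintype.card_coe]
  -- now use the cycle condition
  have hrat : ∀ v : V, ∑ e : E, (z e : ℚ) *
      ((if t e = v then 1 else 0) - (if s e = v then 1 else 0)) = 0 := by
    intro v
    have h0 : (((∑ e : E, z e * ((if t e = v then 1 else 0) -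
        (if s e = v then 1 else 0))) : ℤ) : ℚ) = 0 := by
      rw [show (∑ e : E, z e * ((if t e = v then 1 else 0) - (if s e = v then 1 else 0)))
        = graphBoundary V E s t z v from rfl, hz]
      simp
    rw [Int.cast_sum] at h0
    have hcongr : ∑ e : E, (z e : ℚ) *
        ((if t e = v then 1 else 0) - (if s e = v then 1 else 0))
        = ∑ e : E, ((z e * ((if t e = v then 1 else 0) -
            (if s e = v then 1 else 0)) : ℤ) : ℚ) := by
      refine Finset.sum_congr rfl fun e _ => ?_
      rw [Int.cast_mul, Int.cast_sub]
      have ha : (((if t e = v then 1 else 0) : ℤ) : ℚ) = (if t e = v then 1 else 0) := by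
        split <;> simp
      have hb : (((if s e = v then 1 else 0) : ℤ) : ℚ) = (if s e = v then 1 else 0) := by
        split <;> simp
      rw [ha, hb]
    rw [hcongr]
    exact h0
  have hsum : ∑ e : T, (z e.1 : ℚ) • f e = 0 := by
    funext v
    simp only [Finset.sum_apply, Pi.smul_apply, smul_eq_mul, hf, Pi.zero_apply]
    have hcoe := Finset.sum_coe_sort T
      (fun e => (z e : ℚ) * ((if t e = v then 1 else 0) - (if s e = v then 1 else 0)))
    rw [hcoe, Finset.sum_subset (Finset.subset_univ T)]
    · exact hrat v
    · intro e _ heT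
      rw [hsupp e heT]; simp
  have hzero := Fintype.linearIndependent_iff.mp hfind (fun e => (z e.1 : ℚ)) hsum
  funext e
  show z e = 0
  by_cases he : e ∈ T
  · have h : ((z e : ℚ)) = 0 := hzero ⟨e, he⟩
    exact_mod_cast h
  · exact hsupp e he

end Aux

/-- Let `D` be a finite directed graph, `G` a finitely
generated free abelian group, and `α : H₁(D) → G` a homomorphism (here
`H₁(D) = ker ∂` inside the 1-chains).  Fix a spanning tree `T`, label every
edge of `T` by `1 ∈ G` and every edge `e ∉ T` by `α` of the fundamental cycle
of `e` (the unique cycle supported on `T ∪ {e}` traversing `e` once positively).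
Let `A^G` be the resulting `G`-labeled adjacency matrix over `ℤ[G]`.  Then
`det(I - A^G) = α(P_D)`: concretely, `det(I - A^G)` is the image of the Perron
polynomial `det(I - A)` under the ring homomorphism induced by the monoid
homomorphism `β : C₁(D) → G` determined by the edge labels, and `β` agrees
with `α` on `H₁(D)`. -/
theorem veering_perron_specialization_via_spanning_tree
    (V E : Type) [Fintype V] [Fintype E] [DecidableEq V] [DecidableEq E]
    (s t : E → V)
    (G : Type) [CommGroup G]
    [Module.Free ℤ (Additive G)] [Module.Finite ℤ (Additive G)]
    (α : (AddMonoidHom.ker (graphBoundary V E s t)) →+ Additive G)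
    (T : Finset E)
    -- `T` is a spanning tree: it has `|V| - 1` edges and connects the graph
    (hTcard : T.card + 1 = Fintype.card V)
    (hTconn : ∀ u v : V, ∃ (n : ℕ) (q : Fin (n + 1) → V), q 0 = u ∧
      q (Fin.last n) = v ∧ ∀ i : Fin n, ∃ e ∈ T,
        (s e = q i.castSucc ∧ t e = q i.succ) ∨
        (t e = q i.castSucc ∧ s e = q i.succ))
    (ℓ : E → G)
    (hℓT : ∀ e ∈ T, ℓ e = 1)
    (hℓfc : ∀ e ∉ T, ∃ (z : E → ℤ) (hz : graphBoundary V E s t z = 0),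
      z e = 1 ∧ (∀ e', e' ∉ T → e' ≠ e → z e' = 0) ∧
      ℓ e = Additive.toMul (α ⟨z, hz⟩)) :
    let C₁ := Multiplicative (E → ℤ)
    let β : C₁ →* G :=
      { toFun := fun x => ∏ e : E, ℓ e ^ (Multiplicative.toAdd x e)
        map_one' := by simp
        map_mul' := by
          intro x y
          rw [← Finset.prod_mul_distrib]
          refine Finset.prod_congr rfl fun e _ => ?_
          have h : Multiplicative.toAdd (x * y) e
              = Multiplicative.toAdd x e + Multiplicative.toAdd y e := rfl
          rw [h, zpow_add] }
    let emb : E → MonoidAlgebra ℤ C₁ := fun e =>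
      MonoidAlgebra.of ℤ C₁ (Multiplicative.ofAdd (Pi.single e (1 : ℤ)))
    let A : Matrix V V (MonoidAlgebra ℤ C₁) :=
      Matrix.of fun a b => ∑ e : E, if s e = a ∧ t e = b then emb e else 0
    let AG : Matrix V V (MonoidAlgebra ℤ G) :=
      Matrix.of fun a b => ∑ e : E,
        if s e = a ∧ t e = b then MonoidAlgebra.of ℤ G (ℓ e) else 0
    ((1 - AG).det = MonoidAlgebra.mapDomainRingHom ℤ β (1 - A).det) ∧
    ∀ z : AddMonoidHom.ker (graphBoundary V E s t),
      β (Multiplicative.ofAdd (z : E → ℤ)) = Additive.toMul (α z) := by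
  classical
  intro C₁ β emb A AG
  have hβsingle : ∀ e : E, β (Multiplicative.ofAdd (Pi.single e (1 : ℤ))) = ℓ e := by
    intro e
    simp only [β, MonoidHom.coe_mk, OneHom.coe_mk, toAdd_ofAdd]
    rw [Finset.prod_eq_single e]
    · simp
    · intro b _ hb
      rw [Pi.single_eq_of_ne hb]; simp
    · simp
  constructor
  · -- determinant identity
    set φ : MonoidAlgebra ℤ C₁ →+* MonoidAlgebra ℤ G :=
      MonoidAlgebra.mapDomainRingHom ℤ β with hφ
    have hmapA : φ.mapMatrix A = AG := by
      refine Matrix.ext fun a b => ?_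
      simp only [RingHom.mapMatrix_apply, Matrix.map_apply, A, AG, Matrix.of_apply]
      rw [map_sum]
      refine Finset.sum_congr rfl fun e _ => ?_
      rw [apply_ite φ, map_zero]
      have hφemb : φ (emb e) = MonoidAlgebra.of ℤ G (ℓ e) := by
        simp only [hφ, emb, MonoidAlgebra.of_apply, MonoidAlgebra.mapDomainRingHom_apply,
          AddMonoidHom.toFun_eq_coe, ZeroHom.toFun_eq_coe]
        erw [MonoidAlgebra.mapDomain_single, hβsingle e]
      rw [hφemb]
    have : (1 : Matrix V V (MonoidAlgebra ℤ G)) - AG = φ.mapMatrix (1 - A) := by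
      rw [map_sub, map_one, hmapA]
    rw [this, ← RingHom.map_det]
  · -- agreement on H₁
    intro z
    choose c hc0 hc1 hc2 hcl using hℓfc
    set S : Finset E := Tᶜ with hS
    have hmem : ∀ e : {x // x ∈ S}, e.1 ∉ T := fun e => Finset.mem_compl.mp e.2
    set w : E → ℤ := (z : E → ℤ) - ∑ e ∈ S.attach, (z : E → ℤ) e.1 • c e.1 (hmem e)
      with hw
    have hwker : graphBoundary V E s t w = 0 := by
      rw [hw, map_sub, map_sum]
      have hz0 : graphBoundary V E s t (z : E → ℤ) = 0 := z.2
      rw [hz0]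
      rw [Finset.sum_eq_zero]
      · simp
      · intro e _
        rw [map_zsmul, hc0 e.1 (hmem e)]
        simp
    have hwsupp : ∀ e' ∉ T, w e' = 0 := by
      intro e' he'
      have he'S : e' ∈ S := Finset.mem_compl.mpr he'
      simp only [hw, Pi.sub_apply, Finset.sum_apply, Pi.smul_apply, smul_eq_mul]
      rw [Finset.sum_eq_single (⟨e', he'S⟩ : {x // x ∈ S})]
      · rw [hc1 e' he']; ring
      · intro b _ hb
        have hne : e' ≠ b.1 := fun h => hb (Subtype.ext h.symm)
        rw [hc2 b.1 (hmem b) e' he' hne, mul_zero]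
      · intro h
        exact absurd (Finset.mem_attach _ _) h
    have hw0 : w = 0 :=
      tree_support_zero V E s t T hTcard hTconn w hwker hwsupp
    have hdecomp : (z : E → ℤ) = ∑ e ∈ S.attach, (z : E → ℤ) e.1 • c e.1 (hmem e) := by
      have h := hw0
      rw [hw] at h
      exact sub_eq_zero.mp h
    -- express z as a sum in the kernel
    have hzsum : z = ∑ e ∈ S.attach, (z : E → ℤ) e.1 •
        (⟨c e.1 (hmem e), hc0 e.1 (hmem e)⟩ : AddMonoidHom.ker (graphBoundary V E s t)) := by
      apply Subtype.ext
      rw [AddSubmonoidClass.coe_finset_sum]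
      conv_lhs => rw [hdecomp]
      exact Finset.sum_congr rfl fun e _ => rfl
    have hα : α z = ∑ e ∈ S.attach, (z : E → ℤ) e.1 •
        α ⟨c e.1 (hmem e), hc0 e.1 (hmem e)⟩ := by
      conv_lhs => rw [hzsum]
      rw [map_sum]
      exact Finset.sum_congr rfl fun e _ => map_zsmul α _ _
    have hgoal : β (Multiplicative.ofAdd (z : E → ℤ))
        = ∏ e : E, ℓ e ^ ((z : E → ℤ) e) := rfl
    rw [hgoal, hα, toMul_sum]
    have hstep1 : ∏ e : E, ℓ e ^ ((z : E → ℤ) e) = ∏ e ∈ S, ℓ e ^ ((z : E → ℤ) e) := by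
      rw [Finset.prod_subset (Finset.subset_univ S)]
      intro e _ heS
      have heT : e ∈ T := by
        by_contra h
        exact heS (Finset.mem_compl.mpr h)
      rw [hℓT e heT, one_zpow]
    rw [hstep1, ← Finset.prod_attach S (fun e => ℓ e ^ ((z : E → ℤ) e))]
    refine Finset.prod_congr rfl fun e _ => ?_
    rw [toMul_zsmul, hcl e.1 (hmem e)]
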